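/- Let α, β ∈ (0,1), C_f, C_g > 0, h > 0 and t ∈ ℝ. Let f : ℝ → ℝ be Hölder of exponent α with constant C_f and g : ℝ → ℝ be Hölder of exponent β with constant C_g, both on an interval containing [t−h, t+h]. Then the h-scale derivative of the product satisfies |□_h(f·g)(t) − □_h f(t)·g(t) − f(t)·□_h g(t)| ≤ √2·C_f·C_g·h^{α+β−1}, where |·| is the complex modulus. -/

import Mathlib

/-- Delta derivative: `Δ_h[f](t) = (f(t+h) − f(t))/h`. -/
noncomputable def deltaD (f : ℝ → ℝ) (h t : ℝ) : ℝ := (f (t + h) - f t) / h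

/-- Nabla derivative: `∇_h[f](t) = (f(t) − f(t−h))/h`. -/
noncomputable def nablaD (f : ℝ → ℝ) (h t : ℝ) : ℝ := (f t - f (t - h)) / h

/-- The `h`-scale derivative:
`□_h f(t) = (1/2)[(Δ_h[f](t) + ∇_h[f](t)) + i(Δ_h[f](t) − ∇_h[f](t))]`. -/
noncomputable def scaleD (f : ℝ → ℝ) (h t : ℝ) : ℂ :=
  (1 / 2 : ℂ) * (((deltaD f h t + nablaD f h t : ℝ) : ℂ)
    + Complex.I * ((deltaD f h t - nablaD f h t : ℝ) : ℂ))

lemma key (A B M : ℝ) (hM : 0 ≤ M) (hA : |A| ≤ M) (hB : |B| ≤ M) :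
    ‖(1/2 : ℂ) * (((A + B : ℝ) : ℂ) + Complex.I * ((A - B : ℝ) : ℂ))‖
      ≤ Real.sqrt 2 * M := by
  have hre : ((1/2 : ℂ) * (((A + B : ℝ) : ℂ) + Complex.I * ((A - B : ℝ) : ℂ))).re = (A + B)/2 := by
    simp; ring
  have him : ((1/2 : ℂ) * (((A + B : ℝ) : ℂ) + Complex.I * ((A - B : ℝ) : ℂ))).im = (A - B)/2 := by
    simp; ring
  rw [Complex.norm_def, Complex.normSq_apply, hre, him]
  have h1 : (A + B)/2 * ((A + B)/2) + (A - B)/2 * ((A - B)/2) ≤ 2 * M^2 := by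
    have a2 : A^2 ≤ M^2 := by nlinarith [abs_nonneg A, sq_abs A, sq_abs M]
    have b2 : B^2 ≤ M^2 := by nlinarith [abs_nonneg B, sq_abs B, sq_abs M]
    nlinarith
  calc Real.sqrt ((A + B)/2 * ((A + B)/2) + (A - B)/2 * ((A - B)/2))
      ≤ Real.sqrt (2 * M^2) := Real.sqrt_le_sqrt h1
    _ = Real.sqrt 2 * M := by
        rw [Real.sqrt_mul (by norm_num), Real.sqrt_sq hM]

/-- Quantitative Leibniz estimate for the `h`-scale derivative of a product of Hölder
functions: if `f` is `α`-Hölder with constant `C_f` and `g` is `β`-Hölder with constant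
`C_g` on `[t−h, t+h]`, then
`|□_h(f·g)(t) − □_h f(t)·g(t) − f(t)·□_h g(t)| ≤ √2·C_f·C_g·h^{α+β−1}`. -/
theorem stmt_4 (α β Cf Cg h t : ℝ) (hα : α ∈ Set.Ioo (0 : ℝ) 1) (hβ : β ∈ Set.Ioo (0 : ℝ) 1)
    (hCf : 0 < Cf) (hCg : 0 < Cg) (hh : 0 < h) (f g : ℝ → ℝ)
    (hf : ∀ s ∈ Set.Icc (t - h) (t + h), ∀ u ∈ Set.Icc (t - h) (t + h),
      |f u - f s| ≤ Cf * |u - s| ^ α)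
    (hg : ∀ s ∈ Set.Icc (t - h) (t + h), ∀ u ∈ Set.Icc (t - h) (t + h),
      |g u - g s| ≤ Cg * |u - s| ^ β) :
    ‖scaleD (fun s => f s * g s) h t
        - scaleD f h t * (g t : ℂ) - (f t : ℂ) * scaleD g h t‖
      ≤ Real.sqrt 2 * Cf * Cg * h ^ (α + β - 1) := by
  set a := f (t + h) - f t with ha
  set b := g (t + h) - g t with hb
  set c := f t - f (t - h) with hc
  set d := g t - g (t - h) with hd
  set A := a * b / h with hA
  set B := -(c * d / h) with hB
  have hexp : scaleD (fun s => f s * g s) h t - scaleD f h t * (g t : ℂ)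
      - (f t : ℂ) * scaleD g h t
      = (1/2 : ℂ) * (((A + B : ℝ) : ℂ) + Complex.I * ((A - B : ℝ) : ℂ)) := by
    simp only [scaleD, deltaD, nablaD, Complex.ext_iff, Complex.sub_re, Complex.sub_im,
      Complex.mul_re, Complex.mul_im, Complex.I_re, Complex.I_im, Complex.ofReal_re,
      Complex.ofReal_im, Complex.add_re, Complex.add_im, Complex.one_re, Complex.one_im,
      Complex.div_re, Complex.div_im, Complex.normSq_apply]
    norm_num
    constructor <;> · simp only [hA, hB, ha, hb, hc, hd]; field_simp; ring
  rw [hexp]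
  set M := Cf * Cg * h ^ (α + β - 1) with hM
  have hMpos : 0 ≤ M := by
    have := Real.rpow_pos_of_pos hh (α + β - 1)
    positivity
  have hMeq : M = (Cf * h ^ α) * (Cg * h ^ β) / h := by
    rw [hM, Real.rpow_sub hh, Real.rpow_add hh, Real.rpow_one]
    ring
  have ht1 : t ∈ Set.Icc (t - h) (t + h) := by constructor <;> linarith
  have ht2 : t + h ∈ Set.Icc (t - h) (t + h) := by constructor <;> linarith
  have ht3 : t - h ∈ Set.Icc (t - h) (t + h) := by constructor <;> linarith
  have habs : |h| = h := abs_of_pos hh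
  have hfa : |a| ≤ Cf * h ^ α := by
    have := hf t ht1 (t + h) ht2
    simpa [ha, habs] using this
  have hgb : |b| ≤ Cg * h ^ β := by
    have := hg t ht1 (t + h) ht2
    simpa [hb, habs] using this
  have hfc : |c| ≤ Cf * h ^ α := by
    have := hf (t - h) ht3 t ht1
    simpa [hc, habs] using this
  have hgd : |d| ≤ Cg * h ^ β := by
    have := hg (t - h) ht3 t ht1
    simpa [hd, habs] using this
  have hAb : |A| ≤ M := by
    rw [hA, hMeq, abs_div, abs_mul, abs_of_pos hh]
    gcongr
  have hBb : |B| ≤ M := by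
    rw [hB, abs_neg, hMeq, abs_div, abs_mul, abs_of_pos hh]
    gcongr
  calc ‖(1/2 : ℂ) * (((A + B : ℝ) : ℂ) + Complex.I * ((A - B : ℝ) : ℂ))‖
      ≤ Real.sqrt 2 * M := key A B M hMpos hAb hBb
    _ = Real.sqrt 2 * Cf * Cg * h ^ (α + β - 1) := by rw [hM]; ring
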